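/- Suppose AG has at least two agents, let a, b ∈ AG be distinct, and let p, q be distinct atomic propositions. Then the formula (⟨{a}⟩p ∧ ⟨{b}⟩q) → ⟨{a, b}⟩(p ∧ q) is not MCL-valid: there exists a general concurrent game model M and a state s of M at which this formula is false. -/

import Mathlib

open scoped Classical

/-- A joint action of a coalition `A`: an assignment of an action to each agent in `A`. -/
def JA (Agent Action : Type) (A : Set Agent) : Type :=
  (a : Agent) → a ∈ A → Action

namespace JA

variable {Agent Action : Type}

/-- The restriction `σ|_B` of a joint action of `A` to a subcoalition `B ⊆ A`. -/
def restrict {A B : Set Agent} (h : B ⊆ A) (σ : JA Agent Action A) : JA Agent Action B :=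
  fun a ha => σ a (h ha)

/-- The union `σ_A ∪ σ_B` of joint actions of coalitions `A` and `B`. -/
noncomputable def union {A B : Set Agent} (σA : JA Agent Action A) (σB : JA Agent Action B) :
    JA Agent Action (A ∪ B) :=
  fun a ha =>
    if h : a ∈ A then σA a h else σB a ((show a ∈ A ∨ a ∈ B from ha).resolve_left h)

/-- Transport of a joint action along an equality of coalitions. -/
def cast {A B : Set Agent} (h : A = B) (σ : JA Agent Action A) : JA Agent Action B :=
  fun a ha => σ a (by rw [h]; exact ha)

end JA

/-- An abstract multi-agent action model. -/
structure AMAM (Agent AP : Type) : Type 1 where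
  State : Type
  Action : Type
  state_nonempty : Nonempty State
  action_nonempty : Nonempty Action
  av : (A : Set Agent) → State → Set (JA Agent Action A)
  out : (A : Set Agent) → State → JA Agent Action A → Set State
  lab : State → Set AP

/-- `⊕{Sa(a) | a ∈ A}`: merge of a family of sets of joint actions of singleton coalitions,
indexed by the agents in `A`: the set of joint actions of `A` obtained as unions `⋃_{a∈A} f(a)`
over choice functions `f` with `f(a) ∈ Sa(a)`. -/
def oplusSingle {Agent Action : Type} (A : Set Agent)
    (Sa : (a : Agent) → Set (JA Agent Action ({a} : Set Agent))) :
    Set (JA Agent Action A) :=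
  {σ | ∃ f : (a : Agent) → a ∈ A → JA Agent Action ({a} : Set Agent),
        (∀ (a : Agent) (ha : a ∈ A), f a ha ∈ Sa a) ∧
        (∀ (a : Agent) (ha : a ∈ A), σ a ha = f a ha a rfl)}

/-- A concurrent game model. -/
structure IsCGM {Agent AP : Type} (M : AMAM Agent AP) : Prop where
  av_agent_nonempty : ∀ (a : Agent) (s : M.State), (M.av {a} s).Nonempty
  av_oplus : ∀ (A : Set Agent) (s : M.State),
    M.av A s = oplusSingle A (fun a => M.av {a} s)
  out_det : ∀ (s : M.State) (σ : JA Agent M.Action (Set.univ : Set Agent)),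
    (σ ∈ M.av Set.univ s → ∃ t : M.State, M.out Set.univ s σ = {t}) ∧
    (σ ∉ M.av Set.univ s → M.out Set.univ s σ = ∅)
  out_union : ∀ (A : Set Agent) (s : M.State) (σ : JA Agent M.Action A),
    M.out A s σ = {t | ∃ σG : JA Agent M.Action (Set.univ : Set Agent),
      JA.restrict (Set.subset_univ A) σG = σ ∧ t ∈ M.out Set.univ s σG}

/-- A general concurrent game model. -/
structure IsGCGM {Agent AP : Type} (M : AMAM Agent AP) : Prop where
  av_restrict : ∀ (A : Set Agent) (s : M.State),
    M.av A s = {σ | ∃ σG ∈ M.av Set.univ s, JA.restrict (Set.subset_univ A) σG = σ}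
  av_grand : ∀ s : M.State,
    M.av Set.univ s = {σ | M.out Set.univ s σ ≠ ∅}
  out_union : ∀ (A : Set Agent) (s : M.State) (σ : JA Agent M.Action A),
    M.out A s σ = {t | ∃ σG : JA Agent M.Action (Set.univ : Set Agent),
      JA.restrict (Set.subset_univ A) σG = σ ∧ t ∈ M.out Set.univ s σG}

/-- The language `Φ` of coalition logic. -/
inductive Formula (Agent AP : Type) : Type
  | top : Formula Agent AP
  | atom : AP → Formula Agent AP
  | neg : Formula Agent AP → Formula Agent AP
  | and : Formula Agent AP → Formula Agent AP → Formula Agent AP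
  | coal : Set Agent → Formula Agent AP → Formula Agent AP

namespace Formula

variable {Agent AP : Type}

def bot : Formula Agent AP := .neg .top
def or (φ ψ : Formula Agent AP) : Formula Agent AP := .neg ((φ.neg).and (ψ.neg))
def imp (φ ψ : Formula Agent AP) : Formula Agent AP := (φ.neg).or ψ
def iff (φ ψ : Formula Agent AP) : Formula Agent AP := (φ.imp ψ).and (ψ.imp φ)

/-- Modal depth. -/
def mdepth : Formula Agent AP → ℕ
  | .top => 0
  | .atom _ => 0
  | .neg φ => φ.mdepth
  | .and φ ψ => max φ.mdepth ψ.mdepth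
  | .coal _ φ => φ.mdepth + 1

end Formula

/-- Satisfaction of a formula at a state of an abstract multi-agent action model. -/
def Sat {Agent AP : Type} (M : AMAM Agent AP) : M.State → Formula Agent AP → Prop
  | _, .top => True
  | s, .atom p => p ∈ M.lab s
  | s, .neg φ => ¬ Sat M s φ
  | s, .and φ ψ => Sat M s φ ∧ Sat M s ψ
  | s, .coal A φ => ∃ σ ∈ M.av A s, ∀ t ∈ M.out A s σ, Sat M t φ

/-- CL-validity: truth at every state of every concurrent game model. -/
def CLValid {Agent AP : Type} (φ : Formula Agent AP) : Prop :=
  ∀ M : AMAM Agent AP, IsCGM M → ∀ s : M.State, Sat M s φ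

/-- MCL-validity: truth at every state of every general concurrent game model. -/
def MCLValid {Agent AP : Type} (φ : Formula Agent AP) : Prop :=
  ∀ M : AMAM Agent AP, IsGCGM M → ∀ s : M.State, Sat M s φ

/-- Propositional evaluation of a formula under a valuation, treating coalition
formulas (and atoms) as propositional atoms. -/
def propEval {Agent AP : Type} (v : Formula Agent AP → Bool) : Formula Agent AP → Bool
  | .top => true
  | .atom p => v (.atom p)
  | .neg φ => !(propEval v φ)
  | .and φ ψ => propEval v φ && propEval v ψ
  | .coal A φ => v (.coal A φ)

/-- `φ` is (an instance of) a propositional tautology. -/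
def Tautology {Agent AP : Type} (φ : Formula Agent AP) : Prop :=
  ∀ v : Formula Agent AP → Bool, propEval v φ = true

/-- `φ` is propositionally satisfiable. -/
def PropSatisfiable {Agent AP : Type} (φ : Formula Agent AP) : Prop :=
  ∃ v : Formula Agent AP → Bool, propEval v φ = true

/-- Pauly's axiomatic system for Coalition Logic CL. -/
inductive PaulyCL {Agent AP : Type} : Formula Agent AP → Prop
  | tau {φ : Formula Agent AP} : Tautology φ → PaulyCL φ
  | mon (A : Set Agent) (φ ψ : Formula Agent AP) :
      PaulyCL ((Formula.coal A (φ.and ψ)).imp (Formula.coal A φ))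
  | live (A : Set Agent) : PaulyCL ((Formula.coal A Formula.bot).neg)
  | ser (A : Set Agent) : PaulyCL (Formula.coal A Formula.top)
  | ia {A B : Set Agent} (h : A ∩ B = ∅) (φ ψ : Formula Agent AP) :
      PaulyCL (((Formula.coal A φ).and (Formula.coal B ψ)).imp
        (Formula.coal (A ∪ B) (φ.and ψ)))
  | max (φ : Formula Agent AP) :
      PaulyCL (((Formula.coal ∅ φ.neg).neg).imp (Formula.coal Set.univ φ))
  | mp {φ ψ : Formula Agent AP} : PaulyCL (φ.imp ψ) → PaulyCL φ → PaulyCL ψ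
  | re {φ ψ : Formula Agent AP} (A : Set Agent) :
      PaulyCL (φ.iff ψ) → PaulyCL ((Formula.coal A φ).iff (Formula.coal A ψ))

/-- The alternative axiomatic system for Coalition Logic CL. -/
inductive AltCL {Agent AP : Type} : Formula Agent AP → Prop
  | tau {φ : Formula Agent AP} : Tautology φ → AltCL φ
  | mg (A : Set Agent) (φ ψ : Formula Agent AP) :
      AltCL ((Formula.coal ∅ (φ.imp ψ)).imp ((Formula.coal A φ).imp (Formula.coal A ψ)))
  | mc {A B : Set Agent} (h : A ⊆ B) (φ : Formula Agent AP) :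
      AltCL ((Formula.coal A φ).imp (Formula.coal B φ))
  | live (A : Set Agent) : AltCL ((Formula.coal A Formula.bot).neg)
  | ser (A : Set Agent) : AltCL (Formula.coal A Formula.top)
  | ia {A B : Set Agent} (h : A ∩ B = ∅) (φ ψ : Formula Agent AP) :
      AltCL (((Formula.coal A φ).and (Formula.coal B ψ)).imp
        (Formula.coal (A ∪ B) (φ.and ψ)))
  | det (A : Set Agent) (φ ψ : Formula Agent AP) :
      AltCL ((Formula.coal A (φ.or ψ)).imp ((Formula.coal A φ).or (Formula.coal Set.univ ψ)))
  | mp {φ ψ : Formula Agent AP} : AltCL (φ.imp ψ) → AltCL φ → AltCL ψ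
  | cn {φ : Formula Agent AP} (A : Set Agent) (ψ : Formula Agent AP) :
      AltCL φ → AltCL ((Formula.coal A ψ).imp (Formula.coal ∅ φ))

/-- The axiomatic system for Minimal Coalition Logic MCL. -/
inductive MCLProv {Agent AP : Type} : Formula Agent AP → Prop
  | tau {φ : Formula Agent AP} : Tautology φ → MCLProv φ
  | mg (A : Set Agent) (φ ψ : Formula Agent AP) :
      MCLProv ((Formula.coal ∅ (φ.imp ψ)).imp ((Formula.coal A φ).imp (Formula.coal A ψ)))
  | mc {A B : Set Agent} (h : A ⊆ B) (φ : Formula Agent AP) :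
      MCLProv ((Formula.coal A φ).imp (Formula.coal B φ))
  | live (A : Set Agent) : MCLProv ((Formula.coal A Formula.bot).neg)
  | mp {φ ψ : Formula Agent AP} : MCLProv (φ.imp ψ) → MCLProv φ → MCLProv ψ
  | cn {φ : Formula Agent AP} (A : Set Agent) (ψ : Formula Agent AP) :
      MCLProv φ → MCLProv ((Formula.coal A ψ).imp (Formula.coal ∅ φ))

/-- Literals of classical propositional logic. -/
inductive IsLiteral {Agent AP : Type} : Formula Agent AP → Prop
  | pos (p : AP) : IsLiteral (Formula.atom p)
  | neg (p : AP) : IsLiteral ((Formula.atom p).neg)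

/-- Elementary disjunctions: disjunctions of (possibly zero) literals. -/
inductive IsElemDisj {Agent AP : Type} : Formula Agent AP → Prop
  | bot : IsElemDisj Formula.bot
  | lit {φ : Formula Agent AP} : IsLiteral φ → IsElemDisj φ
  | disj {φ ψ : Formula Agent AP} : IsElemDisj φ → IsElemDisj ψ → IsElemDisj (φ.or ψ)

/-- Elementary conjunctions: conjunctions of (possibly zero) literals. -/
inductive IsElemConj {Agent AP : Type} : Formula Agent AP → Prop
  | top : IsElemConj Formula.top
  | lit {φ : Formula Agent AP} : IsLiteral φ → IsElemConj φ
  | conj {φ ψ : Formula Agent AP} : IsElemConj φ → IsElemConj ψ → IsElemConj (φ.and ψ)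

/-- Conjunction of a list of formulas. -/
def bigAnd {Agent AP : Type} : List (Formula Agent AP) → Formula Agent AP
  | [] => Formula.top
  | [φ] => φ
  | φ :: l => φ.and (bigAnd l)

/-- Disjunction of a list of formulas. -/
def bigOr {Agent AP : Type} : List (Formula Agent AP) → Formula Agent AP
  | [] => Formula.bot
  | [φ] => φ
  | φ :: l => φ.or (bigOr l)

/-- The data of a standard formula
`γ ∨ (⋀_{i∈N} ⟨A_i⟩φ_i → ⋁_{j∈P} ⟨B_j⟩ψ_j)`. -/
structure StdFormula (Agent AP : Type) where
  γ : Formula Agent AP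
  hγ : IsElemDisj γ
  n : ℕ
  m : ℕ
  hm : 0 < m
  A : Fin n → Set Agent
  φ : Fin n → Formula Agent AP
  B : Fin m → Set Agent
  ψ : Fin m → Formula Agent AP
  hN : n ≠ 0 → ∃ i : Fin n, A i = (∅ : Set Agent) ∧ φ i = Formula.top
  hP : ∃ j : Fin m, B j = (Set.univ : Set Agent) ∧ ψ j = Formula.bot

/-- The standard formula determined by the data. -/
def StdFormula.toFormula {Agent AP : Type} (S : StdFormula Agent AP) : Formula Agent AP :=
  S.γ.or ((bigAnd (List.ofFn fun i => Formula.coal (S.A i) (S.φ i))).imp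
      (bigOr (List.ofFn fun j => Formula.coal (S.B j) (S.ψ j))))

/-- `φ_{N0} = ⋀{φ_i | i ∈ N, A_i = ∅}`. -/
noncomputable def StdFormula.phiN0 {Agent AP : Type} (S : StdFormula Agent AP) :
    Formula Agent AP :=
  bigAnd (((List.finRange S.n).filter fun i => decide (S.A i = (∅ : Set Agent))).map S.φ)

/-- The atomic propositions that are conjuncts of a formula. -/
def posAtoms {Agent AP : Type} : Formula Agent AP → Set AP
  | .atom p => {p}
  | .and φ ψ => posAtoms φ ∪ posAtoms ψ
  | _ => ∅

/-- A general game form with outcome states indexed by `ι`. -/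
structure GameForm (Agent ι : Type) : Type 1 where
  Action0 : Type
  action_nonempty : Nonempty Action0
  outcome_nonempty : Nonempty ι
  av0 : (A : Set Agent) → Set (JA Agent Action0 A)
  out0 : (A : Set Agent) → JA Agent Action0 A → Set ι
  av0_restrict : ∀ A : Set Agent,
    av0 A = {σ | ∃ σG ∈ av0 Set.univ, JA.restrict (Set.subset_univ A) σG = σ}
  av0_out : ∀ σ : JA Agent Action0 (Set.univ : Set Agent),
    σ ∈ av0 Set.univ ↔ out0 Set.univ σ ≠ ∅
  out0_union : ∀ (A : Set Agent) (σ : JA Agent Action0 A),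
    out0 A σ = {j | ∃ σG : JA Agent Action0 (Set.univ : Set Agent),
      JA.restrict (Set.subset_univ A) σG = σ ∧ j ∈ out0 Set.univ σG}

/-- The model grafted from a family of pointed models `(Mi i, si i)`, an elementary
conjunction `γ`, and a general game form `F`.  The new state `s_0` is `none`; the states
of `Mi i` are embedded as `some ⟨i, ·⟩`; the actions of `F` and of the `Mi i` are kept
disjoint via a sum type. -/
noncomputable def grafted {Agent AP ι : Type}
    (Mi : ι → AMAM Agent AP) (si : (i : ι) → (Mi i).State)
    (γ : Formula Agent AP) (F : GameForm Agent ι) : AMAM Agent AP where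
  State := Option ((i : ι) × (Mi i).State)
  Action := F.Action0 ⊕ ((i : ι) × (Mi i).Action)
  state_nonempty := ⟨none⟩
  action_nonempty := ⟨Sum.inl (Classical.choice F.action_nonempty)⟩
  av := fun A s =>
    match s with
    | none => {σ | ∃ τ ∈ F.av0 A, σ = fun a ha => Sum.inl (τ a ha)}
    | some ⟨i, u⟩ => {σ | ∃ τ ∈ (Mi i).av A u, σ = fun a ha => Sum.inr ⟨i, τ a ha⟩}
  out := fun A s σ =>
    match s with
    | none => {t | ∃ τ : JA Agent F.Action0 A,
        (σ = fun a ha => Sum.inl (τ a ha)) ∧ ∃ j ∈ F.out0 A τ, t = some ⟨j, si j⟩}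
    | some ⟨i, u⟩ => {t | ∃ τ : JA Agent (Mi i).Action A,
        (σ = fun a ha => Sum.inr ⟨i, τ a ha⟩) ∧ ∃ u' ∈ (Mi i).out A u τ, t = some ⟨i, u'⟩}
  lab := fun s =>
    match s with
    | none => posAtoms γ
    | some ⟨i, u⟩ => (Mi i).lab u

/-! ### Auxiliary construction for Statement 9 -/

/-- Base grand-coalition outcome function for the counterexample model. -/
noncomputable def stmt9outU {Agent AP : Type} (a b : Agent) (p q : AP) :
    Fin 3 → JA Agent Bool (Set.univ : Set Agent) → Set (Fin 3) :=
  fun s σ =>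
    if s = 0 ∧ σ a (Set.mem_univ a) = σ b (Set.mem_univ b)
    then {if σ a (Set.mem_univ a) then 1 else 2} else ∅

/-- The counterexample model for Statement 9. -/
noncomputable def stmt9M {Agent AP : Type} (a b : Agent) (p q : AP) : AMAM Agent AP where
  State := Fin 3
  Action := Bool
  state_nonempty := ⟨0⟩
  action_nonempty := ⟨true⟩
  av := fun A s => {τ | ∃ σG, stmt9outU a b p q s σG ≠ ∅ ∧
    JA.restrict (Set.subset_univ A) σG = τ}
  out := fun A s σ => {t | ∃ σG, JA.restrict (Set.subset_univ A) σG = σ ∧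
    t ∈ stmt9outU a b p q s σG}
  lab := fun s => if s = 1 then {p} else if s = 2 then {q} else ∅

lemma stmt9_restrict_univ {Agent Action : Type}
    (σ : JA Agent Action (Set.univ : Set Agent)) :
    JA.restrict (Set.subset_univ Set.univ) σ = σ := rfl

lemma stmt9_out_univ {Agent AP : Type} (a b : Agent) (p q : AP) (s : Fin 3)
    (σ : JA Agent Bool (Set.univ : Set Agent)) :
    (stmt9M a b p q (AP := AP)).out Set.univ s σ = stmt9outU a b p q s σ := by
  ext t
  simp [stmt9M, stmt9_restrict_univ]

lemma stmt9M_isGCGM {Agent AP : Type} (a b : Agent) (p q : AP) :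
    IsGCGM (stmt9M a b p q (Agent := Agent) (AP := AP)) := by
  constructor
  · intro A s
    ext σ
    constructor
    · rintro ⟨σG, hne, hres⟩
      exact ⟨σG, ⟨σG, hne, rfl⟩, hres⟩
    · rintro ⟨σG, ⟨σ', hne, hres'⟩, hres⟩
      cases hres'
      exact ⟨σ', hne, hres⟩
  · intro s
    ext σ
    show (∃ σG, stmt9outU a b p q s σG ≠ ∅ ∧ JA.restrict (Set.subset_univ _) σG = σ) ↔ _
    simp only [stmt9_restrict_univ, Set.mem_setOf_eq, stmt9_out_univ, ne_eq,
      exists_eq_right]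
    constructor
    · rintro ⟨σG, h, e⟩
      subst e
      rw [stmt9_out_univ a b p q s σG]
      exact h
    · intro h
      rw [stmt9_out_univ a b p q s σ] at h
      exact ⟨σ, h, rfl⟩
  · intro A s σ
    ext t
    constructor
    · rintro ⟨σG, hres, ht⟩
      exact ⟨σG, hres, σG, rfl, ht⟩
    · rintro ⟨σG, hres, σ', hres', ht⟩
      cases hres'
      exact ⟨σ', hres, ht⟩

lemma stmt9_mem_ite_empty {α : Type} {c : Prop} [Decidable c] {s : Set α} {x : α}
    (h : x ∈ if c then s else ∅) : c ∧ x ∈ s := by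
  split at h
  · exact ⟨‹c›, h⟩
  · exact absurd h (Set.notMem_empty x)

/-- the independence-of-agents schema is not MCL-valid. -/
theorem stmt9 {Agent AP : Type} [Fintype Agent] [Nonempty Agent] [Countable AP]
    (a b : Agent) (hab : a ≠ b) (p q : AP) (hpq : p ≠ q) :
    ∃ M : AMAM Agent AP, IsGCGM M ∧ ∃ s : M.State,
      ¬ Sat M s (((Formula.coal ({a} : Set Agent) (Formula.atom p)).and
          (Formula.coal ({b} : Set Agent) (Formula.atom q))).imp
        (Formula.coal ({a, b} : Set Agent) ((Formula.atom p).and (Formula.atom q)))) := by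
  refine ⟨stmt9M a b p q, stmt9M_isGCGM a b p q, (0 : Fin 3), ?_⟩
  simp only [Formula.imp, Formula.or, Sat]
  push_neg
  refine ⟨⟨?_, ?_⟩, ?_⟩
  · -- ⟨{a}⟩ p
    refine ⟨JA.restrict (Set.subset_univ _) (fun _ _ => true),
      ⟨fun _ _ => true, ?_, rfl⟩, ?_⟩
    · simp [stmt9outU]
    · rintro t ⟨σG, hres, ht⟩
      have hva : σG a (Set.mem_univ a) = true := congrFun (congrFun hres a) rfl
      rw [stmt9outU] at ht
      obtain ⟨-, ht⟩ := stmt9_mem_ite_empty ht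
      rw [hva] at ht
      simp only [if_true, Set.mem_singleton_iff] at ht
      subst ht
      simp [stmt9M]
  · -- ⟨{b}⟩ q
    refine ⟨JA.restrict (Set.subset_univ _) (fun _ _ => false),
      ⟨fun _ _ => false, ?_, rfl⟩, ?_⟩
    · simp [stmt9outU]
    · rintro t ⟨σG, hres, ht⟩
      have hvb : σG b (Set.mem_univ b) = false := congrFun (congrFun hres b) rfl
      rw [stmt9outU] at ht
      obtain ⟨⟨-, heq⟩, ht⟩ := stmt9_mem_ite_empty ht
      rw [heq, hvb] at ht
      simp only [Bool.false_eq_true, if_false, Set.mem_singleton_iff] at ht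
      subst ht
      simp [stmt9M, hpq]
  · -- no joint action of {a,b} forces p ∧ q
    rintro σ ⟨σG, hne, hres⟩
    rw [stmt9outU] at hne
    split at hne
    · rename_i hcond
      refine ⟨((if σG a (Set.mem_univ a) then 1 else 2 : Fin 3)), ⟨σG, hres, ?_⟩, ?_⟩
      · rw [stmt9outU, if_pos hcond]
        exact rfl
      · cases hva : σG a (Set.mem_univ a)
        · simp only [Bool.false_eq_true, if_false]
          intro hp
          simp [stmt9M] at hp
          exact absurd hp hpq
        · simp only [if_true]
          intro _ hq
          simp [stmt9M] at hq
          exact hpq hq.symm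
    · exact absurd rfl hne
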